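/- For fixed r ∈ ℝ and λ ≥ 0, the minimum value of o ↦ (r - o)² + λ|o| over ℝ equals ρ(r), where ρ is the scaled Huber loss: ρ(u) = u² if |u| ≤ λ/2, and ρ(u) = λ|u| - λ²/4 if |u| > λ/2. -/
import Mathlib


/-- The minimum value of `o ↦ (r - o)² + λ|o|` equals the scaled Huber loss `ρ(r)`. -/
theorem stmt_1 (r l : ℝ) (hl : 0 ≤ l) :
    IsLeast (Set.range fun o : ℝ => (r - o) ^ 2 + l * |o|)
      (if |r| ≤ l / 2 then r ^ 2 else l * |r| - l ^ 2 / 4) := by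
  split_ifs with h
  · constructor
    · exact ⟨0, by simp⟩
    · rintro x ⟨o, rfl⟩
      have h1 : |r| * |o| ≤ l / 2 * |o| := mul_le_mul_of_nonneg_right h (abs_nonneg o)
      have h2 : r * o ≤ |r| * |o| := (le_abs_self _).trans (abs_mul r o).le
      simp only
      nlinarith [abs_nonneg o, sq_nonneg o]
  · push_neg at h
    constructor
    · refine ⟨r - (if 0 ≤ r then l / 2 else -(l / 2)), ?_⟩
      split_ifs with hr
      · have hr' : |r| = r := abs_of_nonneg hr
        have h2 : |r - l / 2| = r - l / 2 := abs_of_nonneg (by rw [hr'] at h; linarith)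
        simp only []
        rw [show r - (r - l / 2) = l / 2 by ring, h2, hr']
        ring
      · push_neg at hr
        have hr' : |r| = -r := abs_of_neg hr
        have h2 : |r - -(l / 2)| = -(r + l / 2) := by
          rw [abs_of_nonpos (by rw [hr'] at h; linarith)]; ring
        simp only []
        rw [show r - (r - -(l / 2)) = -(l / 2) by ring, h2, hr']
        ring
    · rintro x ⟨o, rfl⟩
      have h1 : |r| - |o| ≤ |r - o| := abs_sub_abs_le_abs_sub r o
      have h2 : l * (|r| - |o|) ≤ l * |r - o| := mul_le_mul_of_nonneg_left h1 hl
      have h3 : (0:ℝ) ≤ (|r - o| - l / 2) ^ 2 := sq_nonneg _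
      have h4 : |r - o| ^ 2 = (r - o) ^ 2 := sq_abs _
      simp only
      nlinarith
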